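/- Let M be a II₁- or II_∞-factor and let I, J be (M,M)-sub-bimodules of the algebra of τ-measurable operators. Then [IJ, M] ⊆ [I, J], where IJ is the submodule spanned by products AB with A ∈ I, B ∈ J, and [X, Y] denotes the linear span of commutators. -/

import Mathlib

/-- The commutator space `[X, Y]`: the additive group generated by all commutators
`a * b - b * a` with `a ∈ X`, `b ∈ Y`. -/
def commutatorSpace {A : Type*} [Ring A] (X Y : Set A) : AddSubgroup A :=
  AddSubgroup.closure {z | ∃ a ∈ X, ∃ b ∈ Y, z = a * b - b * a}

/-- If `M` is a subring (playing the role of a type II factor inside the algebra `A` of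
τ-measurable operators) and `I`, `J` are sub-(M,M)-bimodules of `A`, then
`[IJ, M] ⊆ [I, J]`, where `IJ` is the additive span of products `a*b`, `a ∈ I`, `b ∈ J`. -/
theorem stmt_5 {A : Type*} [Ring A] (M : Subring A) (I J : AddSubgroup A)
    (hIl : ∀ m ∈ M, ∀ a ∈ I, m * a ∈ I) (hIr : ∀ m ∈ M, ∀ a ∈ I, a * m ∈ I)
    (hJl : ∀ m ∈ M, ∀ b ∈ J, m * b ∈ J) (hJr : ∀ m ∈ M, ∀ b ∈ J, b * m ∈ J) :
    (commutatorSpace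
        ((AddSubgroup.closure {x : A | ∃ a ∈ I, ∃ b ∈ J, x = a * b} : AddSubgroup A) :
          Set A)
        (M : Set A) : Set A) ⊆
      (commutatorSpace (I : Set A) (J : Set A) : Set A) := by
  have key : ∀ p ∈ (AddSubgroup.closure {x : A | ∃ a ∈ I, ∃ b ∈ J, x = a * b}),
      ∀ m ∈ M, p * m - m * p ∈ commutatorSpace (I : Set A) (J : Set A) := by
    intro p hp
    induction hp using AddSubgroup.closure_induction with
    | mem z hz =>
      obtain ⟨a, ha, b, hb, rfl⟩ := hz
      intro m hm
      have h1 : a * (b * m) - (b * m) * a ∈ commutatorSpace (I : Set A) (J : Set A) :=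
        AddSubgroup.subset_closure ⟨a, ha, b * m, hJr m hm b hb, rfl⟩
      have h2 : (m * a) * b - b * (m * a) ∈ commutatorSpace (I : Set A) (J : Set A) :=
        AddSubgroup.subset_closure ⟨m * a, hIl m hm a ha, b, hb, rfl⟩
      have : a * b * m - m * (a * b)
          = (a * (b * m) - (b * m) * a) - ((m * a) * b - b * (m * a)) := by noncomm_ring
      rw [this]
      exact sub_mem h1 h2
    | zero =>
      intro m hm
      simpa using (commutatorSpace (I : Set A) (J : Set A)).zero_mem
    | add p q _ _ hp hq =>
      intro m hm
      have : (p + q) * m - m * (p + q) = (p * m - m * p) + (q * m - m * q) := by noncomm_ring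
      rw [this]
      exact add_mem (hp m hm) (hq m hm)
    | neg p _ hp =>
      intro m hm
      have : (-p) * m - m * (-p) = -(p * m - m * p) := by noncomm_ring
      rw [this]
      exact neg_mem (hp m hm)
  intro x hx
  induction hx using AddSubgroup.closure_induction with
  | mem z hz =>
    obtain ⟨p, hp, m, hm, rfl⟩ := hz
    exact key p hp m hm
  | zero => exact (commutatorSpace (I : Set A) (J : Set A)).zero_mem
  | add a b _ _ ha hb => exact add_mem ha hb
  | neg a _ ha => exact neg_mem ha
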